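/- Let r ≥ 1 be an integer. If S ⊆ G is a non-empty sum-free subset of the elementary abelian 2-group G of rank r and g ∈ G, then 0 ∉ S and the set g + (S ∪ {0}) is round. -/

import Mathlib

open Pointwise

/-- **Observation.** Let `r ≥ 1`. If `S ⊆ G = Fin r → ZMod 2` is non-empty and sum-free and
`g ∈ G`, then `0 ∉ S` and the set `g + (S ∪ {0})` is round. -/
theorem stmt_19 (r : ℕ) (hr : 1 ≤ r) (S : Set (Fin r → ZMod 2)) (hSne : S.Nonempty)
    (hsf : S ∩ (S + S) = ∅) (g : Fin r → ZMod 2) :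
    0 ∉ S ∧
    ∀ B : Set (Fin r → ZMod 2), B ⊂ (fun x => g + x) '' (S ∪ {0}) →
      B + B ≠ ((fun x => g + x) '' (S ∪ {0})) + ((fun x => g + x) '' (S ∪ {0})) := by
  have hsf' : ∀ a ∈ S, a ∉ S + S := fun a ha hab =>
    Set.eq_empty_iff_forall_notMem.mp hsf a ⟨ha, hab⟩
  have h0 : (0 : Fin r → ZMod 2) ∉ S := by
    intro h
    exact hsf' 0 h (by simpa using Set.add_mem_add h h)
  have hgg : g + g = 0 := by
    funext i
    exact CharTwo.add_self_eq_zero (g i)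
  have himg : ∀ X : Set (Fin r → ZMod 2), (fun x => g + x) '' X = {g} + X := by
    intro X
    rw [Set.singleton_add]
  have haddimg : ∀ X Y : Set (Fin r → ZMod 2),
      ((fun x => g + x) '' X) + ((fun x => g + x) '' Y) = X + Y := by
    intro X Y
    rw [himg, himg, add_add_add_comm, Set.singleton_add_singleton, hgg,
      Set.singleton_zero, zero_add]
  have key : ∀ C : Set (Fin r → ZMod 2), C ⊂ S ∪ {0} →
      C + C ≠ (S ∪ {0}) + (S ∪ {0}) := by
    intro C hC heq
    obtain ⟨s, hs⟩ := hSne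
    by_cases hSC : S ⊆ C
    · have h0C : (0 : Fin r → ZMod 2) ∉ C := by
        intro h0C
        apply hC.2
        intro x hx
        rcases hx with hx | hx
        · exact hSC hx
        · rw [Set.mem_singleton_iff] at hx; rw [hx]; exact h0C
      have hCS : C = S := by
        apply Set.Subset.antisymm _ hSC
        intro x hx
        rcases hC.1 hx with h | h
        · exact h
        · rw [Set.mem_singleton_iff] at h; subst h; exact absurd hx h0C
      have hsAA : s ∈ (S ∪ {0}) + (S ∪ {0}) := by
        have := Set.add_mem_add (s := S ∪ {0}) (t := S ∪ {0})
          (Set.mem_union_left _ hs) (Set.mem_union_right _ rfl)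
        simpa using this
      rw [← heq, hCS] at hsAA
      exact hsf' s hs hsAA
    · obtain ⟨t, htS, htC⟩ := Set.not_subset.mp hSC
      have htAA : t ∈ (S ∪ {0}) + (S ∪ {0}) := by
        have := Set.add_mem_add (s := S ∪ {0}) (t := S ∪ {0})
          (Set.mem_union_left _ htS) (Set.mem_union_right _ rfl)
        simpa using this
      rw [← heq] at htAA
      obtain ⟨c1, hc1, c2, hc2, hcc0⟩ := htAA
      have hcc : c1 + c2 = t := hcc0
      rcases hC.1 hc1 with h1 | h1 <;> rcases hC.1 hc2 with h2 | h2
      · exact hsf' t htS (hcc ▸ Set.add_mem_add h1 h2)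
      · rw [Set.mem_singleton_iff] at h2; rw [h2, add_zero] at hcc
        exact htC (hcc ▸ hc1)
      · rw [Set.mem_singleton_iff] at h1; rw [h1, zero_add] at hcc
        exact htC (hcc ▸ hc2)
      · rw [Set.mem_singleton_iff] at h1 h2; rw [h1, h2, add_zero] at hcc
        rw [← hcc] at htS
        exact h0 htS
  refine ⟨h0, ?_⟩
  intro B hB heq
  have hinv : ∀ X : Set (Fin r → ZMod 2),
      (fun x => g + x) '' ((fun x => g + x) '' X) = X := by
    intro X
    rw [← Set.image_comp]
    convert Set.image_id X using 2
    rename_i x _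
    show g + (g + x) = x
    rw [← add_assoc, hgg, zero_add]
  set C := (fun x => g + x) '' B with hCdef
  have hBC : (fun x => g + x) '' C = B := hinv B
  have hCsub : C ⊆ S ∪ {0} := by
    intro x hx
    obtain ⟨b, hb, rfl⟩ := hx
    obtain ⟨a, ha, rfl⟩ := hB.1 hb
    show g + (g + a) ∈ S ∪ {0}
    rw [← add_assoc, hgg, zero_add]
    exact ha
  have hCne : C ≠ S ∪ {0} := by
    intro h
    apply hB.ne
    rw [← hBC, h]
  have hCC : C + C = (S ∪ {0}) + (S ∪ {0}) := by
    rw [← haddimg C C, hBC, heq, haddimg]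
  exact key C (lt_of_le_of_ne hCsub hCne) hCC
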